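/- arXiv:1412.8411 — 2 statements merged into one kernel-verified Lean document; each statement's English description precedes it below -/
import Mathlib

section
/- Let 0 ≤ i ≤ n and let diag_! : SSet → ssSet be the left adjoint to restriction along the diagonal Δ → Δ × Δ. Then the bisimplicial set diag_!(Λⁿᵢ) is naturally isomorphic to the sub-bisimplicial set of Δⁿ ⊠ Δⁿ whose (j,k)-bisimplices are the pairs (α : [j] → [n], β : [k] → [n]) such that there exists l ∈ [n] with l ≠ i and l not in the image of α nor in the image of β. -/
open CategoryTheory Simplicial

/-- The sub-bisimplicial set of `Δⁿ ⊠ Δⁿ` whose `(j,k)`-bisimplices are the pairs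
`(α : [j] ⟶ ⦋n⦌, β : [k] ⟶ ⦋n⦌)` such that some `l ≠ i` lies neither in the image of `α`
nor in the image of `β`. -/
def hornExtProd (n : ℕ) (i : Fin (n + 1)) : (SimplexCategory × SimplexCategory)ᵒᵖ ⥤ Type where
  obj p := { q : (p.unop.1 ⟶ ⦋n⦌) × (p.unop.2 ⟶ ⦋n⦌) //
      ∃ l : Fin (n + 1), l ≠ i ∧ (∀ a, q.1.toOrderHom a ≠ l) ∧ (∀ b, q.2.toOrderHom b ≠ l) }
  map {p p'} f := TypeCat.ofHom fun q => ⟨(f.unop.1 ≫ q.1.1, f.unop.2 ≫ q.1.2), by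
    obtain ⟨l, hl, h₁, h₂⟩ := q.2
    exact ⟨l, hl, fun a => h₁ _, fun b => h₂ _⟩⟩
  map_id := by
    intro p
    ext q
    all_goals simp
  map_comp := by
    intro p p' p'' f g
    ext q
    all_goals simp



namespace DiagLanHornAux

open SimplexCategory SSet Opposite

abbrev Rf : ((SimplexCategory × SimplexCategory)ᵒᵖ ⥤ Type) ⥤ SSet.{0} :=
  (Functor.whiskeringLeft _ _ _).obj (Functor.diag SimplexCategory).op

lemma exists_avoid {n : ℕ} {i : Fin (n + 1)} {m : SimplexCategoryᵒᵖ} (α : (Λ[n, i] : SSet.{0}).obj m) :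
    ∃ l : Fin (n + 1), l ≠ i ∧
      ∀ a, (stdSimplex.objEquiv α.1).toOrderHom a ≠ l := by
  obtain ⟨l, hl⟩ := (Set.ne_univ_iff_exists_notMem _).mp α.2
  simp only [Set.mem_union, Set.mem_singleton_iff, Set.mem_range, not_or, not_exists] at hl
  exact ⟨l, hl.2, fun a ha => hl.1 a ha⟩

/-- A horn simplex from a map avoiding some `l ≠ i`. -/
def hornElt {n : ℕ} {i : Fin (n + 1)} {x : SimplexCategory} (f : x ⟶ ⦋n⦌) (l : Fin (n + 1))
    (hl : l ≠ i) (hf : ∀ a, f.toOrderHom a ≠ l) : (Λ[n, i] : SSet.{0}).obj (op x) :=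
  ⟨stdSimplex.objEquiv.symm f, by
    intro h
    rcases (Set.eq_univ_iff_forall.mp h l) with ⟨a, ha⟩ | h'
    · exact hf a ha
    · exact hl h'⟩

lemma horn_map_hornElt {n : ℕ} {i : Fin (n + 1)} {x y : SimplexCategory} (g : y ⟶ x)
    (f : x ⟶ ⦋n⦌) (l : Fin (n + 1)) (hl : l ≠ i) (hf : ∀ a, f.toOrderHom a ≠ l) :
    (Λ[n, i] : SSet.{0}).map g.op (hornElt f l hl hf) =
      hornElt (g ≫ f) l hl (fun a => hf _) := by
  apply Subtype.ext
  rfl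

lemma hornElt_eq {n : ℕ} {i : Fin (n + 1)} {x : SimplexCategory} (f : x ⟶ ⦋n⦌) (g : x ⟶ ⦋n⦌)
    (hfg : f = g) (l l' : Fin (n + 1)) (hl hl') (hf hf') :
    hornElt (i := i) f l hl hf = hornElt g l' hl' hf' := by
  subst hfg
  rfl

/-- Factoring a map avoiding `j` through the face `δ j`. -/
def fac {n : ℕ} {x : SimplexCategory} (f : x ⟶ ⦋n + 1⦌) (j : Fin (n + 2)) : x ⟶ ⦋n⦌ :=
  f ≫ σ (Fin.predAbove 0 j)

lemma fac_spec {n : ℕ} {x : SimplexCategory} (f : x ⟶ ⦋n + 1⦌) (j : Fin (n + 2))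
    (hj : ∀ a, f.toOrderHom a ≠ j) : fac f j ≫ δ j = f := by
  induction x using SimplexCategory.rec with
  | _ m => exact factor_δ_spec f j hj

lemma fac_natural {n : ℕ} {x y : SimplexCategory} (g : y ⟶ x) (f : x ⟶ ⦋n + 1⦌)
    (j : Fin (n + 2)) : fac (g ≫ f) j = g ≫ fac f j := by
  simp [fac]

/-- The comparison map `Λ[n,i] ⟶ diag^* (hornExtProd n i)`. -/
def eta (n : ℕ) (i : Fin (n + 1)) : (Λ[n, i] : SSet.{0}) ⟶ Rf.obj (hornExtProd n i) where
  app m := TypeCat.ofHom fun α => ⟨(stdSimplex.objEquiv α.1, stdSimplex.objEquiv α.1), by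
    obtain ⟨l, h1, h2⟩ := exists_avoid α
    exact ⟨l, h1, h2, h2⟩⟩
  naturality m m' f := by
    refine ConcreteCategory.hom_ext _ _ fun α => ?_
    apply Subtype.ext
    rfl

end DiagLanHornAux

namespace DiagLanHornAux

open SimplexCategory SSet Opposite

lemma delta_avoids {n : ℕ} (l : Fin (n + 2)) :
    ∀ a, (δ (n := n) l).toOrderHom a ≠ l := fun a => Fin.succAbove_ne l a

lemma key_lt {n : ℕ} {i : Fin (n + 2)} (X : (SimplexCategory × SimplexCategory)ᵒᵖ ⥤ Type)
    (ψ : (Λ[n + 1, i] : SSet.{0}) ⟶ Rf.obj X) {x y : SimplexCategory}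
    (a : x ⟶ ⦋n + 1⦌) (b : y ⟶ ⦋n + 1⦌) (l l' : Fin (n + 2)) (hll' : l < l')
    (hl : l ≠ i) (hl' : l' ≠ i)
    (hal : ∀ k, a.toOrderHom k ≠ l) (hbl : ∀ k, b.toOrderHom k ≠ l)
    (hal' : ∀ k, a.toOrderHom k ≠ l') (hbl' : ∀ k, b.toOrderHom k ≠ l') :
    X.map (Quiver.Hom.op ((fac a l, fac b l) : (x, y) ⟶ (⦋n⦌, ⦋n⦌)))
        (ψ.app (op ⦋n⦌) (hornElt (δ l) l hl (delta_avoids l))) =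
      X.map (Quiver.Hom.op ((fac a l', fac b l') : (x, y) ⟶ (⦋n⦌, ⦋n⦌)))
        (ψ.app (op ⦋n⦌) (hornElt (δ l') l' hl' (delta_avoids l'))) := by
  -- n must be at least 1
  obtain ⟨m, rfl⟩ : ∃ m, n = m + 1 := by
    refine ⟨n - 1, ?_⟩
    have h1 : l.val < l'.val := hll'
    have h2 : l'.val < n + 2 := l'.isLt
    have h3 : i.val < n + 2 := i.isLt
    have h4 : l.val ≠ i.val := fun h => hl (Fin.ext h)
    have h5 : l'.val ≠ i.val := fun h => hl' (Fin.ext h)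
    omega
  -- set up the two face indices
  have hlast : l ≠ Fin.last (m + 2) := by
    intro h
    have h1 : l.val < l'.val := hll'
    have h2 : l'.val < m + 3 := l'.isLt
    have h3 : l.val = m + 2 := congrArg Fin.val h
    omega
  have hzero : l' ≠ 0 := by
    intro h
    have h1 : l.val < l'.val := hll'
    have h3 : l'.val = 0 := congrArg Fin.val h
    omega
  set i₀ : Fin (m + 2) := l.castPred hlast with hi₀
  set j₀ : Fin (m + 2) := l'.pred hzero with hj₀
  have hij : i₀ ≤ j₀ := by
    have h1 : l.val < l'.val := hll'
    simp only [Fin.le_iff_val_le_val, hi₀, hj₀, Fin.coe_castPred, Fin.coe_pred]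
    omega
  have hcc : δ i₀ ≫ δ l' = δ j₀ ≫ δ l := by
    have h := δ_comp_δ (i := i₀) (j := j₀) hij
    rwa [hj₀, hi₀, Fin.succ_pred, Fin.castSucc_castPred] at h
  -- factor a
  have hu : fac a l ≫ δ l = a := fac_spec a l hal
  have hv : fac b l ≫ δ l = b := fac_spec b l hbl
  have hu' : fac a l' ≫ δ l' = a := fac_spec a l' hal'
  have hv' : fac b l' ≫ δ l' = b := fac_spec b l' hbl'
  have hdelta_j : (δ (n := m + 1) l).toOrderHom j₀ = l' := by
    show l.succAbove j₀ = l'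
    rw [Fin.succAbove_of_le_castSucc]
    · rw [hj₀]; exact Fin.succ_pred _ _
    · have h1 : l.val < l'.val := hll'
      simp only [Fin.le_iff_val_le_val, Fin.coe_castSucc, hj₀, Fin.coe_pred]
      omega
  have hdelta_i : (δ (n := m + 1) l').toOrderHom i₀ = l := by
    show l'.succAbove i₀ = l
    rw [Fin.succAbove_of_castSucc_lt]
    · rw [hi₀]; exact Fin.castSucc_castPred _ _
    · rw [hi₀]; rwa [Fin.castSucc_castPred]
  have huj : ∀ k, (fac a l).toOrderHom k ≠ j₀ := by
    intro k hk
    apply hal' k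
    conv_lhs => rw [← hu]
    show (δ l).toOrderHom ((fac a l).toOrderHom k) = l'
    rw [hk]
    exact hdelta_j
  have hvj : ∀ k, (fac b l).toOrderHom k ≠ j₀ := by
    intro k hk
    apply hbl' k
    conv_lhs => rw [← hv]
    show (δ l).toOrderHom ((fac b l).toOrderHom k) = l'
    rw [hk]
    exact hdelta_j
  set w : x ⟶ ⦋m⦌ := fac (fac a l) j₀ with hwdef
  set wb : y ⟶ ⦋m⦌ := fac (fac b l) j₀ with hwbdef
  have hw : w ≫ δ j₀ = fac a l := fac_spec _ _ huj
  have hwb : wb ≫ δ j₀ = fac b l := fac_spec _ _ hvj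
  have hw' : w ≫ δ i₀ = fac a l' := by
    rw [← cancel_mono (δ l'), Category.assoc, hcc, ← Category.assoc, hw, hu, hu']
  have hwb' : wb ≫ δ i₀ = fac b l' := by
    rw [← cancel_mono (δ l'), Category.assoc, hcc, ← Category.assoc, hwb, hv, hv']
  -- rewrite both sides
  have hcomp : ∀ {xx yy : SimplexCategory} (f : xx ⟶ ⦋m⦌) (g : yy ⟶ ⦋m⦌) (e : Fin (m + 2))
      (s : X.obj (op ((⦋m + 1⦌ : SimplexCategory), (⦋m + 1⦌ : SimplexCategory)))),
      X.map (Quiver.Hom.op ((f ≫ δ e, g ≫ δ e) : (xx, yy) ⟶ (⦋m + 1⦌, ⦋m + 1⦌))) s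
        = X.map (Quiver.Hom.op ((f, g) : (xx, yy) ⟶ (⦋m⦌, ⦋m⦌)))
            (X.map (Quiver.Hom.op ((δ e, δ e) : ((⦋m⦌ : SimplexCategory), (⦋m⦌ : SimplexCategory)) ⟶ (⦋m + 1⦌, ⦋m + 1⦌))) s) := by
    intro xx yy f g e s
    rw [← types_comp_apply (X.map _) (X.map _), ← X.map_comp, ← op_comp]
    rfl
  have hψj := types_congr_hom (ψ.naturality (Quiver.Hom.op (δ j₀)))
      (hornElt (δ l) l hl (delta_avoids l))
  have hψi := types_congr_hom (ψ.naturality (Quiver.Hom.op (δ i₀)))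
      (hornElt (δ l') l' hl' (delta_avoids l'))
  dsimp only [types_comp_apply] at hψj hψi
  rw [← hw, ← hwb, ← hw', ← hwb', hcomp, hcomp]
  apply congrArg
  show (Rf.obj X).map (Quiver.Hom.op (δ j₀)) (ψ.app (op ⦋m + 1⦌) (hornElt (δ l) l hl (delta_avoids l)))
      = (Rf.obj X).map (Quiver.Hom.op (δ i₀)) (ψ.app (op ⦋m + 1⦌) (hornElt (δ l') l' hl' (delta_avoids l')))
  rw [← hψj, ← hψi, horn_map_hornElt, horn_map_hornElt]
  exact congrArg _ (hornElt_eq _ _ hcc.symm _ _ _ _ _ _)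

lemma key {n : ℕ} {i : Fin (n + 2)} (X : (SimplexCategory × SimplexCategory)ᵒᵖ ⥤ Type)
    (ψ : (Λ[n + 1, i] : SSet.{0}) ⟶ Rf.obj X) {x y : SimplexCategory}
    (a : x ⟶ ⦋n + 1⦌) (b : y ⟶ ⦋n + 1⦌) (l l' : Fin (n + 2))
    (hl : l ≠ i) (hl' : l' ≠ i)
    (hal : ∀ k, a.toOrderHom k ≠ l) (hbl : ∀ k, b.toOrderHom k ≠ l)
    (hal' : ∀ k, a.toOrderHom k ≠ l') (hbl' : ∀ k, b.toOrderHom k ≠ l') :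
    X.map (Quiver.Hom.op ((fac a l, fac b l) : (x, y) ⟶ (⦋n⦌, ⦋n⦌)))
        (ψ.app (op ⦋n⦌) (hornElt (δ l) l hl (delta_avoids l))) =
      X.map (Quiver.Hom.op ((fac a l', fac b l') : (x, y) ⟶ (⦋n⦌, ⦋n⦌)))
        (ψ.app (op ⦋n⦌) (hornElt (δ l') l' hl' (delta_avoids l'))) := by
  rcases lt_trichotomy l l' with h | h | h
  · exact key_lt X ψ a b l l' h hl hl' hal hbl hal' hbl'
  · subst h; rfl
  · exact (key_lt X ψ a b l' l h hl' hl hal' hbl' hal hbl).symm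

end DiagLanHornAux

namespace DiagLanHornAux

open SimplexCategory SSet Opposite

variable {n : ℕ} {i : Fin (n + 2)} (X : (SimplexCategory × SimplexCategory)ᵒᵖ ⥤ Type)
  (ψ : (Λ[n + 1, i] : SSet.{0}) ⟶ Rf.obj X)

/-- The underlying function of the inverse comparison map. -/
noncomputable def GmorApp (p : (SimplexCategory × SimplexCategory)ᵒᵖ) (q : (hornExtProd (n + 1) i).obj p) :
    X.obj p :=
  X.map (Quiver.Hom.op ((fac q.1.1 q.2.choose, fac q.1.2 q.2.choose) :
      (p.unop.1, p.unop.2) ⟶ (⦋n⦌, ⦋n⦌)))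
    (ψ.app (op ⦋n⦌) (hornElt (δ q.2.choose) q.2.choose q.2.choose_spec.1 (delta_avoids _)))

lemma GmorApp_eq {p : (SimplexCategory × SimplexCategory)ᵒᵖ}
    (q : (hornExtProd (n + 1) i).obj p) (l : Fin (n + 2)) (hl : l ≠ i)
    (h1 : ∀ a, q.1.1.toOrderHom a ≠ l) (h2 : ∀ a, q.1.2.toOrderHom a ≠ l) :
    GmorApp X ψ p q = X.map (Quiver.Hom.op ((fac q.1.1 l, fac q.1.2 l) :
        (p.unop.1, p.unop.2) ⟶ (⦋n⦌, ⦋n⦌)))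
      (ψ.app (op ⦋n⦌) (hornElt (δ l) l hl (delta_avoids l))) :=
  key X ψ q.1.1 q.1.2 q.2.choose l q.2.choose_spec.1 hl
    q.2.choose_spec.2.1 q.2.choose_spec.2.2 h1 h2

/-- The inverse comparison map `hornExtProd (n+1) i ⟶ X`. -/
noncomputable def Gmor : hornExtProd (n + 1) i ⟶ X where
  app p := TypeCat.ofHom (GmorApp X ψ p)
  naturality p p' f := by
    refine ConcreteCategory.hom_ext _ _ fun q => ?_
    show GmorApp X ψ p' ((hornExtProd (n + 1) i).map f q) = X.map f (GmorApp X ψ p q)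
    rw [GmorApp_eq X ψ ((hornExtProd (n + 1) i).map f q) q.2.choose q.2.choose_spec.1
      (fun a => q.2.choose_spec.2.1 _) (fun a => q.2.choose_spec.2.2 _)]
    show X.map (Quiver.Hom.op ((fac (f.unop.1 ≫ q.1.1) q.2.choose,
        fac (f.unop.2 ≫ q.1.2) q.2.choose) : (p'.unop.1, p'.unop.2) ⟶ (⦋n⦌, ⦋n⦌))) _ = _
    rw [fac_natural, fac_natural]
    rw [show ((f.unop.1 ≫ fac q.1.1 q.2.choose, f.unop.2 ≫ fac q.1.2 q.2.choose) :
        (p'.unop.1, p'.unop.2) ⟶ (⦋n⦌, ⦋n⦌))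
      = f.unop ≫ ((fac q.1.1 q.2.choose, fac q.1.2 q.2.choose) :
        (p.unop.1, p.unop.2) ⟶ (⦋n⦌, ⦋n⦌)) from rfl]
    rw [op_comp, X.map_comp]
    rfl

lemma eta_Gmor : eta (n + 1) i ≫ Rf.map (Gmor X ψ) = ψ := by
  apply NatTrans.ext
  funext m
  refine ConcreteCategory.hom_ext _ _ fun α => ?_
  show GmorApp X ψ ((Functor.diag SimplexCategory).op.obj m) ((eta (n + 1) i).app m α)
    = ψ.app m α
  set q := (eta (n + 1) i).app m α with hq
  have h1 : ∀ a, (q.1.1).toOrderHom a ≠ q.2.choose := q.2.choose_spec.2.1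
  have hmap := types_congr_hom (ψ.naturality (Quiver.Hom.op (fac q.1.1 q.2.choose)))
    (hornElt (δ q.2.choose) q.2.choose q.2.choose_spec.1 (delta_avoids _))
  dsimp only [types_comp_apply] at hmap
  show (Rf.obj X).map (Quiver.Hom.op (fac q.1.1 q.2.choose))
      (ψ.app (op ⦋n⦌) (hornElt (δ q.2.choose) q.2.choose q.2.choose_spec.1 (delta_avoids _)))
    = ψ.app m α
  rw [← hmap, horn_map_hornElt]
  show ψ.app m (hornElt (fac q.1.1 q.2.choose ≫ δ q.2.choose) q.2.choose q.2.choose_spec.1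
      (fun a => delta_avoids q.2.choose ((fac q.1.1 q.2.choose).toOrderHom a))) = ψ.app m α
  refine congrArg (ψ.app m) (Subtype.ext ?_)
  show stdSimplex.objEquiv.symm (fac q.1.1 q.2.choose ≫ δ q.2.choose) = α.1
  rw [fac_spec _ _ h1]
  exact stdSimplex.objEquiv.symm_apply_apply α.1

end DiagLanHornAux

namespace DiagLanHornAux

open SimplexCategory SSet Opposite

variable {n : ℕ} {i : Fin (n + 2)}

lemma finOne_eq (a b : Fin 1) : a = b := by
  have ha := a.isLt
  have hb := b.isLt
  exact Fin.ext (by omega)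

lemma Gmor_comp_eq_id {Y : (SimplexCategory × SimplexCategory)ᵒᵖ ⥤ Type}
    (ψ : (Λ[n + 1, i] : SSet.{0}) ⟶ Rf.obj Y) (F : Y ⟶ hornExtProd (n + 1) i)
    (hF : ψ ≫ Rf.map F = eta (n + 1) i) : Gmor Y ψ ≫ F = 𝟙 _ := by
  apply NatTrans.ext
  funext p
  refine ConcreteCategory.hom_ext _ _ fun q => ?_
  have hnat := types_congr_hom (F.naturality (Quiver.Hom.op
      ((fac q.1.1 q.2.choose, fac q.1.2 q.2.choose) : (p.unop.1, p.unop.2) ⟶ (⦋n⦌, ⦋n⦌))))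
    (ψ.app (op ⦋n⦌) (hornElt (δ q.2.choose) q.2.choose q.2.choose_spec.1 (delta_avoids _)))
  have hinner := types_congr_hom (NatTrans.congr_app hF (op ⦋n⦌))
    (hornElt (δ q.2.choose) q.2.choose q.2.choose_spec.1 (delta_avoids _))
  simp only [NatTrans.comp_app] at hinner
  have hinner' : F.app (op ((⦋n⦌ : SimplexCategory), (⦋n⦌ : SimplexCategory)))
      (ψ.app (op ⦋n⦌) (hornElt (δ q.2.choose) q.2.choose q.2.choose_spec.1 (delta_avoids _)))
      = (eta (n + 1) i).app (op ⦋n⦌)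
          (hornElt (δ q.2.choose) q.2.choose q.2.choose_spec.1 (delta_avoids _)) := hinner
  show F.app p (GmorApp Y ψ p q) = q
  refine hnat.trans ?_
  simp only [types_comp_apply]
  rw [hinner']
  apply Subtype.ext
  apply Prod.ext
  · exact fac_spec _ _ q.2.choose_spec.2.1
  · exact fac_spec _ _ q.2.choose_spec.2.2

end DiagLanHornAux


/-- For `0 ≤ i ≤ n`, the left adjoint `diag_!` to restriction along the diagonal
`Δ ⥤ Δ × Δ` carries the horn `Λ[n, i]` to the sub-bisimplicial set of `Δⁿ ⊠ Δⁿ` consisting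
of pairs `(α, β)` such that some `l ≠ i` avoids the images of both `α` and `β`. -/
theorem diagLan_horn_iso (n : ℕ) (i : Fin (n + 1))
    (L : SSet.{0} ⥤ ((SimplexCategory × SimplexCategory)ᵒᵖ ⥤ Type))
    (adj : L ⊣ ((Functor.whiskeringLeft _ _ _).obj (Functor.diag SimplexCategory).op :
      ((SimplexCategory × SimplexCategory)ᵒᵖ ⥤ Type) ⥤ SSet.{0})) :
    Nonempty (L.obj Λ[n, i] ≅ hornExtProd n i) := by
  
  obtain _ | n := n
  · refine ⟨{
      hom := (adj.homEquiv _ _).symm (DiagLanHornAux.eta 0 i)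
      inv := {
        app := fun p => TypeCat.ofHom fun q => (q.2.choose_spec.1 (DiagLanHornAux.finOne_eq _ _)).elim
        naturality := fun p p' f => by
          refine ConcreteCategory.hom_ext _ _ fun q => ?_
          exact (q.2.choose_spec.1 (DiagLanHornAux.finOne_eq _ _)).elim }
      hom_inv_id := ?_
      inv_hom_id := ?_ }⟩
    · apply (adj.homEquiv _ _).injective
      rw [Adjunction.homEquiv_naturality_right, Equiv.apply_symm_apply, Adjunction.homEquiv_unit,
        CategoryTheory.Functor.map_id]
      refine Eq.trans ?_ (Category.comp_id _).symm
      apply NatTrans.ext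
      funext m
      refine ConcreteCategory.hom_ext _ _ fun α => ?_
      obtain ⟨l, hl, -⟩ := DiagLanHornAux.exists_avoid α
      exact (hl (DiagLanHornAux.finOne_eq _ _)).elim
    · apply NatTrans.ext
      funext p
      refine ConcreteCategory.hom_ext _ _ fun q => ?_
      exact (q.2.choose_spec.1 (DiagLanHornAux.finOne_eq _ _)).elim
  · refine ⟨{
      hom := (adj.homEquiv _ _).symm (DiagLanHornAux.eta (n + 1) i)
      inv := DiagLanHornAux.Gmor (L.obj Λ[n + 1, i]) (adj.unit.app Λ[n + 1, i])
      hom_inv_id := ?_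
      inv_hom_id := ?_ }⟩
    · apply (adj.homEquiv _ _).injective
      rw [Adjunction.homEquiv_naturality_right, Equiv.apply_symm_apply, Adjunction.homEquiv_unit,
        CategoryTheory.Functor.map_id]
      refine Eq.trans ?_ (Category.comp_id _).symm
      exact DiagLanHornAux.eta_Gmor (L.obj Λ[n + 1, i]) (adj.unit.app Λ[n + 1, i])
    · apply DiagLanHornAux.Gmor_comp_eq_id
      rw [← Adjunction.homEquiv_unit, Equiv.apply_symm_apply]
end

section
/- Let n ≥ 1 and let S be a nonempty proper subset of {0, 1, …, n}. Let K ⊆ Δⁿ be the simplicial subset whose m-simplices are the maps α : [m] → [n] whose image does not contain S (equivalently, K is the union over s ∈ S of the faces of Δⁿ opposite the vertices s). Then K is weakly contractible; equivalently, the inclusion K ↪ Δⁿ is a weak homotopy equivalence of simplicial sets (in fact an anodyne extension). Note that for S = [n] \ {i} this recovers the horn Λⁿᵢ. -/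
open CategoryTheory Simplicial

/-- For a set `S` of vertices of `Δⁿ`, the simplicial subset of `Δⁿ` whose `m`-simplices are
the maps `α : [m] ⟶ [n]` whose image does not contain `S`; equivalently, the union over
`s ∈ S` of the faces of `Δⁿ` opposite the vertices `s`.  (For `S = [n] \ {i}` this is the
horn `Λⁿᵢ`.) -/
def faceUnion (n : ℕ) (S : Set (Fin (n + 1))) : SSet.{0} where
  obj m := { α : m.unop ⟶ ⦋n⦌ // ¬ S ⊆ Set.range α.toOrderHom }
  map {m m'} f := TypeCat.ofHom fun α => ⟨f.unop ≫ α.1, fun h => α.2 (fun s hs => by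
    obtain ⟨a, ha⟩ := h hs
    exact ⟨f.unop.toOrderHom a, ha⟩)⟩
  map_id := by
    intro m
    ext α
    simp
  map_comp := by
    intro m m' m'' f g
    ext α
    simp

/-- The inclusion of `faceUnion n S` into the standard simplex `Δⁿ`. -/
def faceUnionInclusion (n : ℕ) (S : Set (Fin (n + 1))) : faceUnion n S ⟶ Δ[n] where
  app m := TypeCat.ofHom fun α => SSet.stdSimplex.objEquiv.symm α.1

namespace FaceUnionAux

open SSet SimplexCategory

/-- Generalization of `SimplexCategory.factor_δ` to an arbitrary source object. -/
def factorδ {x : SimplexCategory} {n : ℕ} (α : x ⟶ ⦋n + 1⦌) (t : Fin (n + 2)) : x ⟶ ⦋n⦌ :=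
  α ≫ σ (Fin.predAbove 0 t)

lemma factorδ_point {n : ℕ} (t a : Fin (n + 2)) (h : a ≠ t) :
    (δ t).toOrderHom ((σ (Fin.predAbove 0 t)).toOrderHom a) = a := by
  have hspec := factor_δ_spec (mkHom (OrderHom.const _ a) : (⦋0⦌ : SimplexCategory) ⟶ ⦋n + 1⦌) t
    (fun k => h)
  have := congrArg (fun g => (Hom.toOrderHom g) 0) hspec
  simpa [factor_δ, comp_toOrderHom, mkHom, Hom.toOrderHom_mk] using this

lemma factorδ_spec {x : SimplexCategory} {n : ℕ} (α : x ⟶ ⦋n + 1⦌) (t : Fin (n + 2))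
    (h : ∀ k, α.toOrderHom k ≠ t) : factorδ α t ≫ δ t = α := by
  ext k : 3
  show (δ t).toOrderHom ((σ (Fin.predAbove 0 t)).toOrderHom (α.toOrderHom k)) = α.toOrderHom k
  exact factorδ_point t (α.toOrderHom k) (h k)

/-- The inclusion between face unions given by enlarging `S`. -/
def faceUnionMap (n : ℕ) {S T : Set (Fin (n + 1))} (h : S ⊆ T) :
    faceUnion n S ⟶ faceUnion n T where
  app k := TypeCat.ofHom fun α => ⟨α.1, fun hc => α.2 (h.trans hc)⟩
  naturality := by intros; rfl

lemma faceUnionMap_comp_inclusion (n : ℕ) {S T : Set (Fin (n + 1))} (h : S ⊆ T) :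
    faceUnionMap n h ≫ faceUnionInclusion n T = faceUnionInclusion n S := rfl

/-- The isomorphism between the horn and the face union over the complement of `i`. -/
def hornToFaceUnion (n : ℕ) (i : Fin (n + 1)) : (Λ[n, i] : SSet) ⟶ faceUnion n ({i}ᶜ) where
  app k := TypeCat.ofHom fun α => ⟨(stdSimplex.objEquiv) α.1, by
    intro hc
    apply α.2
    rw [Set.eq_univ_iff_forall]
    intro j
    by_cases hj : j = i
    · exact Or.inr hj
    · exact Or.inl (hc hj)⟩
  naturality := by intros; rfl

/-- Inverse of `hornToFaceUnion`. -/
def faceUnionToHorn (n : ℕ) (i : Fin (n + 1)) : faceUnion n ({i}ᶜ) ⟶ Λ[n, i] where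
  app k := TypeCat.ofHom fun α => ⟨(stdSimplex.objEquiv).symm α.1, by
    intro hu
    obtain ⟨s, hs, hsr⟩ := Set.not_subset.mp α.2
    have : s ∈ Set.range (stdSimplex.asOrderHom ((stdSimplex.objEquiv).symm α.1)) ∪ {i} :=
      hu ▸ Set.mem_univ s
    rcases this with h | h
    · exact hsr h
    · exact hs h⟩
  naturality := by intros; rfl

/-- The arrow iso between horn inclusion and the face union inclusion for `{i}ᶜ`. -/
def hornArrowIso (n : ℕ) (i : Fin (n + 1)) :
    Arrow.mk (SSet.horn n i).ι ≅ Arrow.mk (faceUnionInclusion n ({i}ᶜ)) :=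
  Arrow.isoMk
    { hom := hornToFaceUnion n i
      inv := faceUnionToHorn n i
      hom_inv_id := by ext k α; apply Subtype.ext; rfl
      inv_hom_id := by ext k α; apply Subtype.ext; rfl }
    (Iso.refl _)
    (by ext k α; rfl)

/-- The map from the standard `m`-simplex onto the face of `Δ[m+1]` opposite `t`,
landing in `faceUnion (m+1) S` provided `t ∈ S`. -/
def faceMapToFaceUnion (m : ℕ) (S : Set (Fin (m + 2))) (t : Fin (m + 2)) (ht : t ∈ S) :
    Δ[m] ⟶ faceUnion (m + 1) S where
  app k := TypeCat.ofHom fun x => ⟨(stdSimplex.objEquiv) x ≫ δ t, by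
    intro hc
    obtain ⟨a, ha⟩ := hc ht
    exact Fin.succAbove_ne t _ ha⟩
  naturality := by intros; rfl

/-- The map from the small face union to the big one, along the face opposite `t`. -/
def smallToBig (m : ℕ) (S : Set (Fin (m + 2))) (t : Fin (m + 2)) :
    faceUnion m (t.succAbove ⁻¹' S) ⟶ faceUnion (m + 1) S where
  app k := TypeCat.ofHom fun β => ⟨β.1 ≫ δ t, by
    intro hc
    apply β.2
    intro j hj
    obtain ⟨a, ha⟩ := hc hj
    exact ⟨a, Fin.succAbove_right_injective ha⟩⟩
  naturality := by intros; rfl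

lemma step (m : ℕ) (S : Set (Fin (m + 2))) (t : Fin (m + 2)) (ht : t ∉ S)
    {E B : SSet.{0}} (p : E ⟶ B)
    (hS' : HasLiftingProperty (faceUnionInclusion m (t.succAbove ⁻¹' S)) p) :
    HasLiftingProperty (faceUnionMap (m + 1) (Set.subset_insert t S)) p := by
  classical
  constructor
  intro f g sq
  set S' : Set (Fin (m + 1)) := t.succAbove ⁻¹' S with hS'def
  set ψ : faceUnion m S' ⟶ faceUnion (m + 1) S := smallToBig m S t with hψ
  set φ : Δ[m] ⟶ faceUnion (m + 1) (insert t S) :=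
    faceMapToFaceUnion m (insert t S) t (Set.mem_insert t S) with hφ
  have hcomm : ψ ≫ faceUnionMap (m + 1) (Set.subset_insert t S) =
      faceUnionInclusion m S' ≫ φ := rfl
  have sqsmall : CommSq (ψ ≫ f) (faceUnionInclusion m S') p (φ ≫ g) := by
    constructor
    rw [Category.assoc, sq.w, ← Category.assoc, hcomm, Category.assoc]
  letI := hS'
  set L : Δ[m] ⟶ E := sqsmall.lift with hL
  have Lleft : faceUnionInclusion m S' ≫ L = ψ ≫ f := sqsmall.fac_left
  have Lright : L ≫ p = φ ≫ g := sqsmall.fac_right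
  -- the key agreement lemma
  have key : ∀ (k : SimplexCategoryᵒᵖ) (α : k.unop ⟶ ⦋m + 1⦌)
      (h1 : ¬ S ⊆ Set.range α.toOrderHom) (h2 : t ∉ Set.range α.toOrderHom),
      L.app k ((stdSimplex.objEquiv).symm (factorδ α t)) = f.app k ⟨α, h1⟩ := by
    intro k α h1 h2
    have hβ : factorδ α t ≫ δ t = α :=
      factorδ_spec α t (fun a ha => h2 ⟨a, ha⟩)
    have hβ' : ¬ S' ⊆ Set.range (factorδ α t).toOrderHom := by
      intro hc
      apply h1
      intro s hs
      have hst : s ≠ t := fun e => ht (e ▸ hs)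
      obtain ⟨j, hj⟩ := Fin.exists_succAbove_eq hst
      obtain ⟨a, ha⟩ := hc (show j ∈ S' by simp only [hS'def, Set.mem_preimage, hj]; exact hs)
      refine ⟨a, ?_⟩
      have : α.toOrderHom a = (factorδ α t ≫ δ t).toOrderHom a := by rw [hβ]
      rw [this]
      show t.succAbove ((factorδ α t).toOrderHom a) = s
      rw [ha, hj]
    have e1 := ConcreteCategory.congr_hom (NatTrans.congr_app Lleft k) ⟨factorδ α t, hβ'⟩
    simp only [NatTrans.comp_app, types_comp_apply] at e1
    refine e1.trans ?_
    exact congrArg (f.app k) (Subtype.ext hβ)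
  refine CommSq.HasLift.mk' ?_
  refine
    { l :=
        { app := fun k => TypeCat.ofHom fun α =>
            if h : S ⊆ Set.range α.1.toOrderHom then
              L.app k ((stdSimplex.objEquiv).symm (factorδ α.1 t))
            else f.app k ⟨α.1, h⟩
          naturality := ?_ }
      fac_left := ?_
      fac_right := ?_ }
  · intro k k' F
    ext α
    -- α : (faceUnion (m+1) (insert t S)).obj k
    have hsub : Set.range (F.unop ≫ α.1).toOrderHom ⊆ Set.range α.1.toOrderHom := by
      rintro x ⟨a, ha⟩
      exact ⟨F.unop.toOrderHom a, ha⟩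
    show (if h' : S ⊆ Set.range (F.unop ≫ α.1).toOrderHom then
        L.app k' ((stdSimplex.objEquiv).symm (factorδ (F.unop ≫ α.1) t))
      else f.app k' ⟨F.unop ≫ α.1, h'⟩) =
      E.map F (if h : S ⊆ Set.range α.1.toOrderHom then
        L.app k ((stdSimplex.objEquiv).symm (factorδ α.1 t))
      else f.app k ⟨α.1, h⟩)
    by_cases h : S ⊆ Set.range α.1.toOrderHom
    · have h2 : t ∉ Set.range α.1.toOrderHom := by
        intro hmem
        apply α.2
        intro x hx
        rcases hx with rfl | hx
        · exact hmem
        · exact h hx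
      have h2' : t ∉ Set.range (F.unop ≫ α.1).toOrderHom := fun hc => h2 (hsub hc)
      have hfac : factorδ (F.unop ≫ α.1) t = F.unop ≫ factorδ α.1 t := by
        simp only [factorδ, Category.assoc]
      have hnat := ConcreteCategory.congr_hom (L.naturality F) ((stdSimplex.objEquiv).symm (factorδ α.1 t))
      simp only [types_comp_apply] at hnat
      have hmap : Δ[m].map F ((stdSimplex.objEquiv).symm (factorδ α.1 t)) =
          (stdSimplex.objEquiv).symm (factorδ (F.unop ≫ α.1) t) := by
        rw [stdSimplex.map_apply, Equiv.apply_symm_apply, hfac]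
      rw [dif_pos h]
      by_cases h' : S ⊆ Set.range (F.unop ≫ α.1).toOrderHom
      · rw [dif_pos h', ← hnat, hmap]
      · rw [dif_neg h', ← hnat, hmap]
        exact (key k' (F.unop ≫ α.1) h' h2').symm
    · have h' : ¬ S ⊆ Set.range (F.unop ≫ α.1).toOrderHom := fun hc =>
        h (fun s hs => hsub (hc hs))
      rw [dif_neg h', dif_neg h]
      exact ConcreteCategory.congr_hom (f.naturality F) ⟨α.1, h⟩
  · ext k α
    show (if h : S ⊆ Set.range α.1.toOrderHom then _ else _) = f.app k α
    rw [dif_neg α.2]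
    rfl
  · ext k α
    show p.app k (if h : S ⊆ Set.range α.1.toOrderHom then _ else _) = g.app k α
    by_cases h : S ⊆ Set.range α.1.toOrderHom
    · rw [dif_pos h]
      have h2 : t ∉ Set.range α.1.toOrderHom := by
        intro hmem
        apply α.2
        intro x hx
        rcases hx with rfl | hx
        · exact hmem
        · exact h hx
      have hβ : factorδ α.1 t ≫ δ t = α.1 :=
        factorδ_spec α.1 t (fun a ha => h2 ⟨a, ha⟩)
      have e2 := ConcreteCategory.congr_hom (NatTrans.congr_app Lright k)
        ((stdSimplex.objEquiv).symm (factorδ α.1 t))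
      simp only [NatTrans.comp_app, types_comp_apply] at e2
      refine e2.trans ?_
      refine congrArg (g.app k) (Subtype.ext ?_)
      show (stdSimplex.objEquiv.{0})
          ((stdSimplex.objEquiv.{0}).symm (factorδ α.1 t)) ≫ δ t = α.1
      rw [Equiv.apply_symm_apply]
      exact hβ
    · rw [dif_neg h]
      have e3 := ConcreteCategory.congr_hom (NatTrans.congr_app sq.w k) ⟨α.1, h⟩
      simp only [NatTrans.comp_app, types_comp_apply] at e3
      exact e3

theorem aux (N : ℕ) : ∀ (n : ℕ), 1 ≤ n → ∀ (S : Set (Fin (n + 1))), S.Nonempty →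
    S ≠ Set.univ → n + (Sᶜ).ncard ≤ N → ∀ {E B : SSet.{0}} (p : E ⟶ B),
    (∀ (m : ℕ), 1 ≤ m → ∀ j : Fin (m + 1),
      HasLiftingProperty (SSet.horn m j).ι p) →
    HasLiftingProperty (faceUnionInclusion n S) p := by
  induction N with
  | zero => intro n hn S _ _ hle; omega
  | succ N IH =>
    intro n hn S hS hS' hle E B p hp
    obtain ⟨i, hi⟩ := Set.nonempty_compl.mpr hS'
    by_cases hbig : Sᶜ ⊆ {i}
    · -- base case : S = {i}ᶜ, the horn case
      have hSeq : S = ({i}ᶜ : Set (Fin (n + 1))) := by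
        ext j
        constructor
        · intro hj hji
          exact hi (hji ▸ hj)
        · intro hj
          by_contra hjS
          exact hj (hbig hjS)
      subst hSeq
      haveI := hp n hn i
      exact HasLiftingProperty.of_arrow_iso_left (hornArrowIso n i) p
    · -- step case
      obtain ⟨t, htc, hti⟩ := Set.not_subset.mp hbig
      obtain ⟨s, hs⟩ := hS
      have ht : t ∉ S := htc
      have hsi : s ≠ i := fun e => hi (e ▸ hs)
      have hst : s ≠ t := fun e => ht (e ▸ hs)
      have hn2 : 2 ≤ n := by
        have hcard : ({s, t, i} : Finset (Fin (n + 1))).card = 3 :=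
          Finset.card_eq_three.mpr ⟨s, t, i, hst, hsi, hti, rfl⟩
        have hle3 : ({s, t, i} : Finset (Fin (n + 1))).card ≤ n + 1 := by
          calc _ ≤ (Finset.univ : Finset (Fin (n + 1))).card := Finset.card_le_univ _
            _ = n + 1 := by simp
        omega
      obtain ⟨m, rfl⟩ : ∃ m, n = m + 2 := ⟨n - 2, by omega⟩
      -- the complement of `insert t S` is strictly smaller
      have hfin : (Sᶜ : Set (Fin (m + 3))).Finite := Set.toFinite _
      have hins : ((insert t S)ᶜ : Set (Fin (m + 3))) = Sᶜ \ {t} := by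
        ext x
        simp [Set.mem_compl_iff, and_comm]
      have hlt : ((insert t S)ᶜ : Set (Fin (m + 3))).ncard < (Sᶜ).ncard := by
        rw [hins]
        exact Set.ncard_diff_singleton_lt_of_mem htc hfin
      have i2 : HasLiftingProperty (faceUnionInclusion (m + 2) (insert t S)) p := by
        refine IH (m + 2) (by omega) (insert t S) ⟨t, Set.mem_insert t S⟩ ?_ (by omega) p hp
        intro hu
        have : i ∈ insert t S := hu ▸ Set.mem_univ i
        rcases this with rfl | h
        · exact hti rfl
        · exact hi h
      -- the small face union for the induction
      set t' : Fin (m + 3) := t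
      set S' : Set (Fin (m + 2)) := t.succAbove ⁻¹' S with hS'def
      have hS'ne : S'.Nonempty := by
        obtain ⟨j, hj⟩ := Fin.exists_succAbove_eq hst
        exact ⟨j, by show t.succAbove j ∈ S; rw [hj]; exact hs⟩
      have hS'univ : S' ≠ Set.univ := by
        obtain ⟨j, hj⟩ := Fin.exists_succAbove_eq (show i ≠ t from fun e => hti (Set.mem_singleton_iff.mpr e.symm))
        intro hu
        have : j ∈ S' := hu ▸ Set.mem_univ j
        rw [hS'def, Set.mem_preimage, hj] at this
        exact hi this
      have hS'c : (S'ᶜ : Set (Fin (m + 2))).ncard < (Sᶜ).ncard := by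
        have himg : t.succAbove '' (S'ᶜ) = Sᶜ \ {t} := by
          have : (S'ᶜ : Set (Fin (m + 2))) = t.succAbove ⁻¹' (Sᶜ) := by
            rw [hS'def]; rfl
          rw [this, Set.image_preimage_eq_inter_range, Fin.range_succAbove]
          ext x
          simp [Set.mem_diff, and_comm]
        have h1 : (S'ᶜ : Set (Fin (m + 2))).ncard = (Sᶜ \ {t} : Set (Fin (m + 3))).ncard := by
          rw [← himg, Set.ncard_image_of_injective _ Fin.succAbove_right_injective]
        rw [h1]
        exact Set.ncard_diff_singleton_lt_of_mem htc hfin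
      have i0 : HasLiftingProperty (faceUnionInclusion (m + 1) S') p :=
        IH (m + 1) (by omega) S' hS'ne hS'univ (by omega) p hp
      have i1 : HasLiftingProperty (faceUnionMap (m + 2) (Set.subset_insert t S)) p :=
        step (m + 1) S t ht p i0
      rw [← faceUnionMap_comp_inclusion (m + 2) (Set.subset_insert t S)]
      exact HasLiftingProperty.of_comp_left _ _ p

end FaceUnionAux

/-- For `n ≥ 1` and `S` a nonempty proper subset of the vertices of `Δⁿ`, the union of the
faces opposite the vertices of `S` is weakly contractible; in fact its inclusion into `Δⁿ` is
an anodyne extension: it has the left lifting property with respect to every morphism having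
the right lifting property with respect to all horn inclusions. -/
theorem faceUnion_inclusion_anodyne (n : ℕ) (hn : 1 ≤ n) (S : Set (Fin (n + 1)))
    (hS : S.Nonempty) (hS' : S ≠ Set.univ) {E B : SSet.{0}} (p : E ⟶ B)
    (hp : ∀ (m : ℕ), 1 ≤ m → ∀ j : Fin (m + 1),
      HasLiftingProperty (SSet.horn m j).ι p) :
    HasLiftingProperty (faceUnionInclusion n S) p :=
  FaceUnionAux.aux (n + (Sᶜ).ncard) n hn S hS hS' le_rfl p hp
end
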